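/- The 3-dimensional commutative algebra over a field K of characteristic ≠ 2 with basis {e_0,e_1,e_2} and products e_0² = e_0, e_0e_1 = ½e_1, e_1² = ½e_2, e_0e_2 = 0, all other products zero, is a Jordan algebra (hence a Lie triple algebra) and is dimensionally nilpotent via d(e_0) = e_1, d(e_1) = e_2, d(e_2) = 0. -/

import Mathlib

/-- The 3-dimensional algebra with e_0² = e_0, e_0e_1 = ½e_1, e_1² = ½e_2,
e_0e_2 = 0 and all other products zero is a Jordan algebra (hence a Lie triple
algebra) and is dimensionally nilpotent via d(e_0) = e_1, d(e_1) = e_2, d(e_2) = 0. -/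
theorem dim3_jordan_case_lambda0 {K A : Type*} [Field K]
    [NonUnitalNonAssocCommRing A] [Module K A] [SMulCommClass K A A] [IsScalarTower K A A]
    (h2 : (2 : K) ≠ 0)
    (e : Module.Basis (Fin 3) K A)
    (h00 : e 0 * e 0 = e 0)
    (h01 : e 0 * e 1 = (2 : K)⁻¹ • e 1)
    (h11 : e 1 * e 1 = (2 : K)⁻¹ • e 2)
    (h02 : e 0 * e 2 = 0)
    (h12 : e 1 * e 2 = 0)
    (h22 : e 2 * e 2 = 0) :
    (∀ x y : A, (x * x) * (y * x) = ((x * x) * y) * x) ∧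
    (∀ x y : A, 2 • (x * (x * (x * y))) + y * (x * (x * x)) = 3 • (x * (y * (x * x)))) ∧
    ∃ d : Module.End K A, (∀ x y : A, d (x * y) = d x * y + x * d y) ∧
      d (e 0) = e 1 ∧ d (e 1) = e 2 ∧ d (e 2) = 0 ∧ d ^ 3 = 0 ∧ d ^ 2 ≠ 0 := by
  have h10 : e 1 * e 0 = (2 : K)⁻¹ • e 1 := by rw [mul_comm, h01]
  have h20 : e 2 * e 0 = 0 := by rw [mul_comm, h02]
  have h21 : e 2 * e 1 = 0 := by rw [mul_comm, h12]
  have mul_expand : ∀ a0 a1 a2 b0 b1 b2 : K,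
      (a0 • e 0 + a1 • e 1 + a2 • e 2) * (b0 • e 0 + b1 • e 1 + b2 • e 2)
        = (a0 * b0) • e 0 + ((2 : K)⁻¹ * (a0 * b1 + a1 * b0)) • e 1
            + ((2 : K)⁻¹ * (a1 * b1)) • e 2 := by
    intro a0 a1 a2 b0 b1 b2
    simp only [add_mul, mul_add, smul_mul_assoc, mul_smul_comm,
      h00, h01, h11, h02, h12, h22, h10, h20, h21, smul_zero, add_zero]
    match_scalars <;> ring
  have repr : ∀ x : A, x = e.repr x 0 • e 0 + e.repr x 1 • e 1 + e.repr x 2 • e 2 := by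
    intro x
    have := e.sum_repr x
    rw [Fin.sum_univ_three] at this
    exact this.symm
  refine ⟨?_, ?_, ?_⟩
  · intro x y
    rw [repr x, repr y]; simp only [mul_expand]
    match_scalars <;> field_simp <;> ring
  · intro x y
    rw [repr x, repr y]
    simp only [mul_expand]
    match_scalars <;> field_simp <;> ring
  · set f : Fin 3 → A := ![e 1, e 2, 0] with hf
    have c0 : e.constr K f (e 0) = e 1 := by rw [e.constr_basis]; simp [hf]
    have c1 : e.constr K f (e 1) = e 2 := by rw [e.constr_basis]; simp [hf]
    have c2 : e.constr K f (e 2) = 0 := by rw [e.constr_basis]; simp [hf]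
    refine ⟨e.constr K f, ?_, c0, c1, c2, ?_, ?_⟩
    · have hd : ∀ a0 a1 a2 : K, (e.constr K f) (a0 • e 0 + a1 • e 1 + a2 • e 2)
          = (0 : K) • e 0 + a0 • e 1 + a1 • e 2 := by
        intro a0 a1 a2
        simp only [map_add, map_smul, c0, c1, c2, smul_zero, add_zero, zero_smul, zero_add]
      intro x y
      rw [repr x, repr y]; simp only [mul_expand, hd]
      match_scalars <;> field_simp <;> ring
    · apply e.ext
      intro i
      fin_cases i <;> simp [pow_succ, Module.End.mul_apply, c0, c1, c2]
    · intro h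
      have := congrFun (congrArg DFunLike.coe h) (e 0)
      simp [pow_succ, Module.End.mul_apply, c0, c1, c2] at this
      exact e.ne_zero 2 this
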